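/- Let k > 2, κ = k² + 1, i = ⌊k/2⌋, and t_k = k(k+1)/2. There exists a k-uniform substitution σ on the alphabet {1,...,k} (if k is even) or {0,...,k-1} (if k is odd) with a unique fixed point ω = (i_n)_{n≥0} such that the anti-k-bonacci numbers satisfy A_n = κ(n-1) + t_k - i + i_{n-1} for all n ≥ 1. In particular, A_n - κ·n is a k-automatic sequence (shifted by a constant). -/
import Mathlib


/-- `A` and `B` (indexed from 1) are complementary strictly increasing sequences
of positive integers: every positive integer lies in exactly one of their ranges. -/
def CompPair (A B : ℕ → ℕ) : Prop :=
  StrictMonoOn A (Set.Ici 1) ∧ StrictMonoOn B (Set.Ici 1) ∧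
  (∀ n, 1 ≤ n → 1 ≤ A n) ∧ (∀ n, 1 ≤ n → 1 ≤ B n) ∧
  ∀ m, 1 ≤ m →
    ((∃ n, 1 ≤ n ∧ A n = m) ∧ ¬(∃ n, 1 ≤ n ∧ B n = m)) ∨
    (¬(∃ n, 1 ≤ n ∧ A n = m) ∧ (∃ n, 1 ≤ n ∧ B n = m))

/-- `(A, B)` is the anti-recurrence pair for the positive linear form `a` of dimension `k`:
`A n = Σ_{j=1}^k a_j * B_{(n-1)k+j}` for all `n ≥ 1`. -/
def AntiRec (k : ℕ) (a : Fin k → ℕ) (A B : ℕ → ℕ) : Prop :=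
  CompPair A B ∧
  ∀ n, 1 ≤ n → A n = ∑ j : Fin k, a j * B ((n - 1) * k + (j : ℕ) + 1)



def sigN (k c j : ℕ) : ℕ :=
  k / 2 + ((Finset.range k).filter
    (fun x => k * (k + 1) / 2 + c ≤ (x + 1) + k / 2 + k * j)).card - j

def omg (k : ℕ) : ℕ → ℕ
  | 0 => k / 2
  | m + 1 =>
    if h : 2 ≤ k then sigN k (omg k ((m + 1) / k)) ((m + 1) % k) else 0
decreasing_by exact Nat.div_lt_self (Nat.succ_pos m) h

lemma omg_zero (k : ℕ) : omg k 0 = k / 2 := by rw [omg]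

lemma omg_succ (k m : ℕ) (hk : 2 ≤ k) :
    omg k (m + 1) = sigN k (omg k ((m + 1) / k)) ((m + 1) % k) := by
  rw [omg]; simp [hk]

lemma Fcard (k c j : ℕ) :
    ((Finset.range k).filter
      (fun x => k * (k + 1) / 2 + c ≤ (x + 1) + k / 2 + k * j)).card
    = k - min k (k * (k + 1) / 2 + c - (k / 2 + k * j) - 1) := by
  set t := k * (k + 1) / 2 with ht
  set u := k * j with hu
  have h : ((Finset.range k).filter (fun x => t + c ≤ (x + 1) + k / 2 + u))
      = Finset.Ico (min k (t + c - (k / 2 + u) - 1)) k := by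
    ext x
    simp only [Finset.mem_filter, Finset.mem_range, Finset.mem_Ico]
    omega
  rw [h, Nat.card_Ico]

lemma tk_even (s : ℕ) : 2*s * (2*s+1) / 2 = 2*(s*s) + s := by
  have h : 2*s * (2*s+1) = 2 * (2*(s*s) + s) := by ring
  rw [h, Nat.mul_div_cancel_left _ (by norm_num : 0 < 2)]

lemma tk_odd (s : ℕ) : (2*s+1) * (2*s+1+1) / 2 = 2*(s*s) + 3*s + 1 := by
  have h : (2*s+1) * (2*s+1+1) = 2 * (2*(s*s) + 3*s + 1) := by ring
  rw [h, Nat.mul_div_cancel_left _ (by norm_num : 0 < 2)]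

lemma sig_bounds (k : ℕ) (hk : 2 < k) (c j : ℕ) (hj : j < k)
    (hc1 : (if k % 2 = 0 then 1 else 0) ≤ c)
    (hc2 : c ≤ (if k % 2 = 0 then k else k - 1)) :
    (if k % 2 = 0 then 1 else 0) + j
        ≤ k / 2 + ((Finset.range k).filter
          (fun x => k * (k + 1) / 2 + c ≤ (x + 1) + k / 2 + k * j)).card ∧
    k / 2 + ((Finset.range k).filter
          (fun x => k * (k + 1) / 2 + c ≤ (x + 1) + k / 2 + k * j)).card
        ≤ (if k % 2 = 0 then k else k - 1) + j := by
  rw [Fcard]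
  rcases Nat.even_or_odd k with ⟨s, hs⟩ | ⟨s, hs⟩
  · have hk2 : k = 2*s := by omega
    subst hk2
    have hmod : 2*s % 2 = 0 := by omega
    rw [tk_even]
    simp only [hmod] at hc1 hc2 ⊢
    norm_num at hc1 hc2 ⊢
    have e1 : 2*s*j = 2*(s*j) := by ring
    rw [e1]
    rcases Nat.lt_trichotomy j s with h|h|h
    · have hm : s*j + s ≤ s*s := by nlinarith
      generalize s*s = P at *
      generalize s*j = Q at *
      omega
    · subst h
      omega
    · have hm : s*s + s ≤ s*j := by nlinarith
      generalize s*s = P at *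
      generalize s*j = Q at *
      omega
  · subst hs
    have hmod : (2*s+1) % 2 = 1 := by omega
    rw [tk_odd]
    simp only [hmod] at hc1 hc2 ⊢
    norm_num at hc1 hc2 ⊢
    have e1 : (2*s+1)*j = 2*(s*j) + j := by ring
    rw [e1]
    rcases Nat.lt_trichotomy j s with h|h|h
    · have hm : s*j + s ≤ s*s := by nlinarith
      generalize s*s = P at *
      generalize s*j = Q at *
      omega
    · subst h
      omega
    · have hm : s*s + s ≤ s*j := by nlinarith
      generalize s*s = P at *
      generalize s*j = Q at *
      omega

lemma tk2 (k : ℕ) : 2 * (k * (k + 1) / 2) = k * k + k := by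
  obtain ⟨r, hr⟩ := Nat.even_mul_succ_self k
  have h : k * (k + 1) = k * k + k := by ring
  omega

lemma kk3 (k : ℕ) (hk : 2 < k) : 3 * k ≤ k * k :=
  Nat.mul_le_mul_right k (by omega)

lemma sig_mem (k : ℕ) (hk : 2 < k) (c j : ℕ) (hj : j < k)
    (hc1 : (if k % 2 = 0 then 1 else 0) ≤ c)
    (hc2 : c ≤ (if k % 2 = 0 then k else k - 1)) :
    (if k % 2 = 0 then 1 else 0) ≤ sigN k c j ∧
      sigN k c j ≤ (if k % 2 = 0 then k else k - 1) := by
  have h := sig_bounds k hk c j hj hc1 hc2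
  unfold sigN
  omega

lemma sig_add (k : ℕ) (hk : 2 < k) (c j : ℕ) (hj : j < k)
    (hc1 : (if k % 2 = 0 then 1 else 0) ≤ c)
    (hc2 : c ≤ (if k % 2 = 0 then k else k - 1)) :
    sigN k c j + j = k / 2 + ((Finset.range k).filter
      (fun x => k * (k + 1) / 2 + c ≤ (x + 1) + k / 2 + k * j)).card := by
  have h := sig_bounds k hk c j hj hc1 hc2
  unfold sigN
  omega

lemma sig_zero (k : ℕ) (hk : 2 < k) (c : ℕ) : sigN k c 0 = k / 2 := by
  unfold sigN
  rw [Fcard]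
  have h1 := tk2 k
  have h2 := kk3 k hk
  have h3 : k * 0 = 0 := by ring
  rw [h3]
  generalize k * (k + 1) / 2 = t at *
  generalize k * k = K at *
  omega

lemma omg_range (k : ℕ) (hk : 2 < k) : ∀ m,
    (if k % 2 = 0 then 1 else 0) ≤ omg k m ∧
      omg k m ≤ (if k % 2 = 0 then k else k - 1) := by
  intro m
  induction m using Nat.strong_induction_on with
  | _ m IH =>
    match m with
    | 0 =>
      rw [omg_zero]
      constructor <;> split <;> omega
    | m + 1 =>
      rw [omg_succ k m (by omega)]
      have hlt : (m + 1) / k < m + 1 := Nat.div_lt_self (Nat.succ_pos m) (by omega)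
      obtain ⟨h1, h2⟩ := IH _ hlt
      exact sig_mem k hk _ _ (Nat.mod_lt _ (by omega)) h1 h2

lemma omg_fix (k : ℕ) (hk : 2 < k) (n j : ℕ) (hj : j < k) :
    omg k (k * n + j) = sigN k (omg k n) j := by
  rcases Nat.eq_zero_or_pos (k * n + j) with h0 | h0
  · have hn : n = 0 := by
      rcases Nat.eq_zero_or_pos n with h | h
      · exact h
      · exfalso; have : k * 1 ≤ k * n := Nat.mul_le_mul_left k h; omega
    have hjj : j = 0 := by omega
    rw [hn, hjj]
    simp only [Nat.mul_zero, Nat.add_zero, omg_zero]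
    rw [sig_zero k hk]
  · obtain ⟨m, hm⟩ : ∃ m, k * n + j = m + 1 := ⟨k * n + j - 1, by omega⟩
    rw [hm, omg_succ k m (by omega)]
    have hd : (m + 1) / k = n := by
      rw [← hm, Nat.mul_add_div (by omega), Nat.div_eq_of_lt hj]
      omega
    have hmod : (m + 1) % k = j := by
      rw [← hm, Nat.mul_add_mod, Nat.mod_eq_of_lt hj]
    rw [hd, hmod]

lemma mono_gap (C : ℕ → ℕ) (hC : StrictMonoOn C (Set.Ici 1)) :
    ∀ a b, 1 ≤ a → a ≤ b → C a + (b - a) ≤ C b := by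
  intro a b ha hab
  induction b, hab using Nat.le_induction with
  | base => omega
  | succ b hb IH =>
    have h : C b < C (b + 1) :=
      hC (by simp only [Set.mem_Ici]; omega) (by simp only [Set.mem_Ici]; omega) (by omega)
    omega


lemma gauss_sum (k a : ℕ) : ∑ j : Fin k, (a + ((j : ℕ) + 1)) = k * a + k * (k + 1) / 2 := by
  rw [Finset.sum_add_distrib, Finset.sum_const, Finset.card_univ, Fintype.card_fin,
    smul_eq_mul]
  have h1 : ∑ j : Fin k, ((j : ℕ) + 1) = k * (k + 1) / 2 := by
    rw [Fin.sum_univ_eq_sum_range (fun x => x + 1)]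
    have h2 : ∑ x ∈ Finset.range (k + 1), x = ∑ x ∈ Finset.range k, (x + 1) + 0 := by
      rw [Finset.sum_range_succ' (fun x => x) k]
    have h3 := Finset.sum_range_id_mul_two (k + 1)
    have h4 : (k + 1) * ((k + 1) - 1) = k * k + k := by
      simp only [Nat.add_sub_cancel]; ring
    have h5 : 2 * (k * (k + 1) / 2) = k * k + k := by
      obtain ⟨r, hr⟩ := Nat.even_mul_succ_self k
      have h : k * (k + 1) = k * k + k := by ring
      omega
    omega
  omega

section AB

variable {k : ℕ} {A B : ℕ → ℕ}

lemma B_ge (hBmono : StrictMonoOn B (Set.Ici 1)) (hBpos : ∀ n, 1 ≤ n → 1 ≤ B n) :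
    ∀ m, 1 ≤ m → m ≤ B m := by
  intro m hm
  have h1 : ∀ a b, 1 ≤ a → a ≤ b → B a + (b - a) ≤ B b := by
    intro a b ha hab
    induction b, hab using Nat.le_induction with
    | base => omega
    | succ b hb IH =>
      have h : B b < B (b + 1) :=
        hBmono (by simp only [Set.mem_Ici]; omega) (by simp only [Set.mem_Ici]; omega)
          (by omega)
      omega
  have := h1 1 m (le_refl 1) hm
  have := hBpos 1 (le_refl 1)
  omega

lemma A_lb (hBmono : StrictMonoOn B (Set.Ici 1)) (hBpos : ∀ n, 1 ≤ n → 1 ≤ B n)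
    (hrec : ∀ n, 1 ≤ n → A n = ∑ j : Fin k, B ((n - 1) * k + ((j : ℕ) + 1))) :
    ∀ p, 1 ≤ p → k * k * (p - 1) + k * (k + 1) / 2 ≤ A p := by
  intro p hp
  have h := hrec p hp
  have hsum : ∑ j : Fin k, ((p - 1) * k + ((j : ℕ) + 1))
      ≤ ∑ j : Fin k, B ((p - 1) * k + ((j : ℕ) + 1)) :=
    Finset.sum_le_sum (fun j _ => B_ge hBmono hBpos _ (by omega))
  rw [gauss_sum] at hsum
  have he : k * ((p - 1) * k) = k * k * (p - 1) := by ring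
  omega

lemma A_ge_id (hk : 2 < k) (hBmono : StrictMonoOn B (Set.Ici 1))
    (hBpos : ∀ n, 1 ≤ n → 1 ≤ B n)
    (hrec : ∀ n, 1 ≤ n → A n = ∑ j : Fin k, B ((n - 1) * k + ((j : ℕ) + 1))) :
    ∀ p, 1 ≤ p → p ≤ A p := by
  intro p hp
  have h := A_lb hBmono hBpos hrec p hp
  have h2 : p - 1 ≤ k * k * (p - 1) := Nat.le_mul_of_pos_left _ (by positivity)
  have h5 : 2 * (k * (k + 1) / 2) = k * k + k := by
    obtain ⟨r, hr⟩ := Nat.even_mul_succ_self k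
    have e : k * (k + 1) = k * k + k := by ring
    omega
  have h6 : 3 * k ≤ k * k := Nat.mul_le_mul_right k (by omega)
  omega

end AB


section AB

variable {k : ℕ} {A B : ℕ → ℕ}

theorem partition_count (hAmono : StrictMonoOn A (Set.Ici 1))
    (hApos : ∀ n, 1 ≤ n → 1 ≤ A n)
    (hAge : ∀ p, 1 ≤ p → p ≤ A p)
    (hBmono : StrictMonoOn B (Set.Ici 1))
    (hBpos : ∀ n, 1 ≤ n → 1 ≤ B n)
    (hBge : ∀ m, 1 ≤ m → m ≤ B m)
    (hcomp : ∀ m, 1 ≤ m →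
      ((∃ n, 1 ≤ n ∧ A n = m) ∧ ¬(∃ n, 1 ≤ n ∧ B n = m)) ∨
      (¬(∃ n, 1 ≤ n ∧ A n = m) ∧ (∃ n, 1 ≤ n ∧ B n = m))) :
    ∀ x, ((Finset.Icc 1 x).filter (fun p => A p ≤ x)).card
      + ((Finset.Icc 1 x).filter (fun q => B q ≤ x)).card = x := by
  classical
  intro x
  have cardbij : ∀ (C : ℕ → ℕ), StrictMonoOn C (Set.Ici 1) → (∀ n, 1 ≤ n → 1 ≤ C n) →
      (∀ p, 1 ≤ p → p ≤ C p) →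
      ((Finset.Icc 1 x).filter (fun p => C p ≤ x)).card
        = ((Finset.Icc 1 x).filter (fun v => ∃ n, 1 ≤ n ∧ C n = v)).card := by
    intro C hmono hpos hge
    apply Finset.card_bij (fun p _ => C p)
    · intro p hp
      simp only [Finset.mem_filter, Finset.mem_Icc] at hp ⊢
      exact ⟨⟨hpos p hp.1.1, hp.2⟩, p, hp.1.1, rfl⟩
    · intro p hp q hq h
      simp only [Finset.mem_filter, Finset.mem_Icc] at hp hq
      exact hmono.injOn (Set.mem_Ici.2 hp.1.1) (Set.mem_Ici.2 hq.1.1) h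
    · intro v hv
      simp only [Finset.mem_filter, Finset.mem_Icc] at hv
      obtain ⟨⟨hv1, hv2⟩, n, hn, rfl⟩ := hv
      refine ⟨n, ?_, rfl⟩
      simp only [Finset.mem_filter, Finset.mem_Icc]
      exact ⟨⟨hn, le_trans (hge n hn) hv2⟩, hv2⟩
  rw [cardbij A hAmono hApos hAge, cardbij B hBmono hBpos hBge]
  have hfeq : (Finset.Icc 1 x).filter (fun v => ∃ n, 1 ≤ n ∧ B n = v)
      = (Finset.Icc 1 x).filter (fun v => ¬∃ n, 1 ≤ n ∧ A n = v) := by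
    apply Finset.filter_congr
    intro v hv
    simp only [Finset.mem_Icc] at hv
    rcases hcomp v hv.1 with ⟨hA, hB⟩ | ⟨hA, hB⟩ <;> simp [hA, hB]
  rw [hfeq]
  have hsplit := Finset.card_filter_add_card_filter_not
      (s := Finset.Icc 1 x) (p := fun v => ∃ n, 1 ≤ n ∧ A n = v)
  rw [Nat.card_Icc] at hsplit
  omega

theorem pos_iff (hAmono : StrictMonoOn A (Set.Ici 1))
    (hApos : ∀ n, 1 ≤ n → 1 ≤ A n)
    (hAge : ∀ p, 1 ≤ p → p ≤ A p)
    (hBmono : StrictMonoOn B (Set.Ici 1))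
    (hBpos : ∀ n, 1 ≤ n → 1 ≤ B n)
    (hBge : ∀ m, 1 ≤ m → m ≤ B m)
    (hcomp : ∀ m, 1 ≤ m →
      ((∃ n, 1 ≤ n ∧ A n = m) ∧ ¬(∃ n, 1 ≤ n ∧ B n = m)) ∨
      (¬(∃ n, 1 ≤ n ∧ A n = m) ∧ (∃ n, 1 ≤ n ∧ B n = m))) :
    ∀ p m, 1 ≤ p → 1 ≤ m → (A p < B m ↔ A p < m + p) := by
  have hpart := partition_count hAmono hApos hAge hBmono hBpos hBge hcomp
  have neqAB : ∀ p m, 1 ≤ p → 1 ≤ m → A p ≠ B m := by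
    intro p m hp hm heq
    rcases hcomp (A p) (hApos p hp) with ⟨hA, hB⟩ | ⟨hA, hB⟩
    · exact hB ⟨m, hm, heq.symm⟩
    · exact hA ⟨p, hp, rfl⟩
  have cntA_at_A : ∀ p, 1 ≤ p →
      ((Finset.Icc 1 (A p)).filter (fun q => A q ≤ A p)).card = p := by
    intro p hp
    have hset : (Finset.Icc 1 (A p)).filter (fun q => A q ≤ A p) = Finset.Icc 1 p := by
      ext q
      simp only [Finset.mem_filter, Finset.mem_Icc]
      constructor
      · rintro ⟨⟨h1, h2⟩, h3⟩
        refine ⟨h1, ?_⟩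
        by_contra hq
        push_neg at hq
        have := hAmono (Set.mem_Ici.2 hp) (Set.mem_Ici.2 h1) hq
        omega
      · rintro ⟨h1, h2⟩
        have hmono := hAmono.monotoneOn (Set.mem_Ici.2 h1) (Set.mem_Ici.2 hp) h2
        have := hAge q h1
        exact ⟨⟨h1, by omega⟩, hmono⟩
    rw [hset, Nat.card_Icc]
    omega
  have Ap_eq : ∀ p, 1 ≤ p →
      A p = p + ((Finset.Icc 1 (A p)).filter (fun q => B q ≤ A p)).card := by
    intro p hp
    have := hpart (A p)
    rw [cntA_at_A p hp] at this
    omega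
  intro p m hp hm
  constructor
  · intro h
    have hAp := Ap_eq p hp
    have hsub : (Finset.Icc 1 (A p)).filter (fun q => B q ≤ A p) ⊆ Finset.Icc 1 (m - 1) := by
      intro q hq
      simp only [Finset.mem_filter, Finset.mem_Icc] at hq ⊢
      refine ⟨hq.1.1, ?_⟩
      by_contra hcon
      push_neg at hcon
      have : B m ≤ B q := hBmono.monotoneOn (Set.mem_Ici.2 hm) (Set.mem_Ici.2 hq.1.1) (by omega)
      omega
    have hcard := Finset.card_le_card hsub
    rw [Nat.card_Icc] at hcard
    omega
  · intro h
    by_contra hcon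
    push_neg at hcon
    have hlt : B m < A p := lt_of_le_of_ne hcon (fun e => neqAB p m hp hm e.symm)
    have hsub : Finset.Icc 1 m ⊆ (Finset.Icc 1 (A p)).filter (fun q => B q ≤ A p) := by
      intro q hq
      simp only [Finset.mem_filter, Finset.mem_Icc] at hq ⊢
      have h1 : B q ≤ B m := hBmono.monotoneOn (Set.mem_Ici.2 hq.1) (Set.mem_Ici.2 hm) hq.2
      have h2 := hBge q hq.1
      exact ⟨⟨hq.1, by omega⟩, by omega⟩
    have hcard := Finset.card_le_card hsub
    rw [Nat.card_Icc] at hcard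
    have := Ap_eq p hp
    omega

end AB


section AB
variable {k : ℕ} {A B : ℕ → ℕ}

theorem B_cnt (hk : 2 < k)
    (hAmono : StrictMonoOn A (Set.Ici 1))
    (hApos : ∀ n, 1 ≤ n → 1 ≤ A n)
    (hAge : ∀ p, 1 ≤ p → p ≤ A p)
    (hAlb : ∀ p, 1 ≤ p → k * k * (p - 1) + k * (k + 1) / 2 ≤ A p)
    (hBmono : StrictMonoOn B (Set.Ici 1))
    (hBpos : ∀ n, 1 ≤ n → 1 ≤ B n)
    (hBge : ∀ m, 1 ≤ m → m ≤ B m)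
    (hcomp : ∀ m, 1 ≤ m →
      ((∃ n, 1 ≤ n ∧ A n = m) ∧ ¬(∃ n, 1 ≤ n ∧ B n = m)) ∨
      (¬(∃ n, 1 ≤ n ∧ A n = m) ∧ (∃ n, 1 ≤ n ∧ B n = m)))
    (hpart : ∀ x, ((Finset.Icc 1 x).filter (fun p => A p ≤ x)).card
      + ((Finset.Icc 1 x).filter (fun q => B q ≤ x)).card = x)
    (hpos : ∀ p m, 1 ≤ p → 1 ≤ m → (A p < B m ↔ A p < m + p)) :
    ∀ m, 1 ≤ m →
      B m = m + ((Finset.Icc 1 m).filter (fun p => A p < m + p)).card := by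
  have neqAB : ∀ p m, 1 ≤ p → 1 ≤ m → A p ≠ B m := by
    intro p m hp hm heq
    rcases hcomp (A p) (hApos p hp) with ⟨hA, hB⟩ | ⟨hA, hB⟩
    · exact hB ⟨m, hm, heq.symm⟩
    · exact hA ⟨p, hp, rfl⟩
  intro m hm
  have cntB_at_B : ((Finset.Icc 1 (B m)).filter (fun q => B q ≤ B m)).card = m := by
    have hset : (Finset.Icc 1 (B m)).filter (fun q => B q ≤ B m) = Finset.Icc 1 m := by
      ext q
      simp only [Finset.mem_filter, Finset.mem_Icc]
      constructor
      · rintro ⟨⟨h1, h2⟩, h3⟩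
        refine ⟨h1, ?_⟩
        by_contra hq
        push_neg at hq
        have := hBmono (Set.mem_Ici.2 hm) (Set.mem_Ici.2 h1) hq
        omega
      · rintro ⟨h1, h2⟩
        have hmono := hBmono.monotoneOn (Set.mem_Ici.2 h1) (Set.mem_Ici.2 hm) h2
        have := hBge q h1
        exact ⟨⟨h1, by omega⟩, hmono⟩
    rw [hset, Nat.card_Icc]
    omega
  have hBm := hpart (B m)
  rw [cntB_at_B] at hBm
  have hfe : (Finset.Icc 1 (B m)).filter (fun p => A p ≤ B m)
      = (Finset.Icc 1 m).filter (fun p => A p < m + p) := by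
    ext p
    simp only [Finset.mem_filter, Finset.mem_Icc]
    constructor
    · rintro ⟨⟨h1, h2⟩, h3⟩
      have hlt : A p < B m := lt_of_le_of_ne h3 (neqAB p m h1 hm)
      have h4 := (hpos p m h1 hm).1 hlt
      refine ⟨⟨h1, ?_⟩, h4⟩
      have h5 := hAlb p h1
      have h9 : (9 : ℕ) ≤ k * k := by
        calc (9 : ℕ) = 3 * 3 := by norm_num
        _ ≤ k * k := Nat.mul_le_mul (by omega) (by omega)
      have h6 : 9 * (p - 1) ≤ k * k * (p - 1) := Nat.mul_le_mul_right _ h9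
      have ht : 2 * (k * (k + 1) / 2) = k * k + k := by
        obtain ⟨r, hr⟩ := Nat.even_mul_succ_self k
        have e : k * (k + 1) = k * k + k := by ring
        omega
      omega
    · rintro ⟨⟨h1, h2⟩, h3⟩
      have h4 := (hpos p m h1 hm).2 h3
      have h5 := hBge m hm
      exact ⟨⟨h1, by omega⟩, by omega⟩
  rw [hfe] at hBm
  omega

theorem A_sum (hk : 2 < k)
    (hrec : ∀ n, 1 ≤ n → A n = ∑ j : Fin k, B ((n - 1) * k + ((j : ℕ) + 1)))
    (hBcnt : ∀ m, 1 ≤ m →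
      B m = m + ((Finset.Icc 1 m).filter (fun p => A p < m + p)).card) :
    ∀ m : ℕ, A (m + 1) = k * k * m + k * (k + 1) / 2
      + ∑ j : Fin k,
          ((Finset.Icc 1 (k * m + ((j : ℕ) + 1))).filter
            (fun p => A p < (k * m + ((j : ℕ) + 1)) + p)).card := by
  intro m
  have h := hrec (m + 1) (by omega)
  simp only [Nat.add_sub_cancel] at h
  have hidx : ∀ j : Fin k, m * k + ((j : ℕ) + 1) = k * m + ((j : ℕ) + 1) := by
    intro j; ring_nf
  rw [Finset.sum_congr rfl (fun j _ => by rw [hidx j])] at h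
  have h2 : ∑ j : Fin k, B (k * m + ((j : ℕ) + 1))
      = ∑ j : Fin k, ((k * m + ((j : ℕ) + 1))
        + ((Finset.Icc 1 (k * m + ((j : ℕ) + 1))).filter
            (fun p => A p < (k * m + ((j : ℕ) + 1)) + p)).card) :=
    Finset.sum_congr rfl (fun j _ => hBcnt (k * m + ((j : ℕ) + 1)) (by omega))
  rw [h2, Finset.sum_add_distrib, gauss_sum] at h
  have he : k * (k * m) = k * k * m := by ring
  omega

end AB

section AB
variable {k : ℕ} {A : ℕ → ℕ}

theorem main_eq (hk : 2 < k)
    (hAgap : ∀ a b, 1 ≤ a → a ≤ b → A a + (b - a) ≤ A b)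
    (hAlb : ∀ p, 1 ≤ p → k * k * (p - 1) + k * (k + 1) / 2 ≤ A p)
    (hAsum : ∀ m : ℕ, A (m + 1) = k * k * m + k * (k + 1) / 2
      + ∑ j : Fin k,
          ((Finset.Icc 1 (k * m + ((j : ℕ) + 1))).filter
            (fun p => A p < (k * m + ((j : ℕ) + 1)) + p)).card) :
    ∀ m : ℕ, A (m + 1) + k / 2 = (k * k + 1) * m + k * (k + 1) / 2 + omg k m := by
  have ht : 2 * (k * (k + 1) / 2) = k * k + k := by
    obtain ⟨r, hr⟩ := Nat.even_mul_succ_self k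
    have e : k * (k + 1) = k * k + k := by ring
    omega
  have h3k : 3 * k ≤ k * k := Nat.mul_le_mul_right k (by omega)
  have homk : ∀ n, omg k n ≤ k := by
    intro n
    have h := (omg_range k hk n).2
    have : (if k % 2 = 0 then k else k - 1) ≤ k := by split <;> omega
    omega
  intro m
  induction m using Nat.strong_induction_on with
  | _ m IH =>
  rcases Nat.eq_zero_or_pos m with rfl | hm
  · -- base case : A 1 = k*(k+1)/2
    rw [omg_zero]
    have h := hAsum 0
    have hz : ∀ j : Fin k,
        ((Finset.Icc 1 (k * 0 + ((j : ℕ) + 1))).filter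
          (fun p => A p < (k * 0 + ((j : ℕ) + 1)) + p)).card = 0 := by
      intro j
      rw [Finset.card_eq_zero, Finset.filter_eq_empty_iff]
      intro p hp
      simp only [Finset.mem_Icc, Nat.mul_zero, Nat.zero_add] at hp ⊢
      have hj : (j : ℕ) < k := j.isLt
      have hb := hAlb p (by omega)
      rcases Nat.lt_or_ge p 2 with h1 | h1
      · have hp1 : p = 1 := by omega
        subst hp1
        simp only [Nat.sub_self, Nat.mul_zero, Nat.zero_add] at hb
        omega
      · have h7 : k * k * 1 ≤ k * k * (p - 1) := Nat.mul_le_mul_left _ (by omega)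
        have e : k * k * 1 = k * k := by ring
        omega
    rw [Finset.sum_congr rfl (fun j _ => hz j), Finset.sum_const_zero] at h
    simp only [Nat.mul_zero, Nat.zero_add, Nat.add_zero] at h ⊢
    omega
  · -- inductive step
    obtain ⟨q0, j0, hj0k, hmq⟩ : ∃ q0 j0, j0 < k ∧ k * q0 + j0 = m :=
      ⟨m / k, m % k, Nat.mod_lt _ (by omega), Nat.div_add_mod m k⟩
    have hq0m : q0 < m := by
      have h00 : 2 * q0 ≤ k * q0 := Nat.mul_le_mul_right q0 (by omega)
      omega
    have hIH := IH q0 hq0m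
    have hrange := omg_range k hk q0
    have e6 : k * m = k * k * q0 + k * j0 := by rw [← hmq]; ring
    have hKJ : k * j0 + k ≤ k * k := by
      have h1 : k * (j0 + 1) ≤ k * k := Nat.mul_le_mul_left k (by omega)
      have h2 : k * j0 + k = k * (j0 + 1) := by ring
      omega
    have e7 : (k * k + 1) * q0 = k * k * q0 + q0 := by ring
    -- small indices always count
    have hsmall : ∀ p r, 1 ≤ p → p ≤ q0 → 1 ≤ r → r ≤ k → A p < (k * m + r) + p := by
      intro p r hp1 hpq hr1 hrk
      have hIHp := IH (p - 1) (by omega)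
      rw [show p - 1 + 1 = p by omega] at hIHp
      have hwk := homk (p - 1)
      have h1 : k * k * (p - 1) ≤ k * k * (q0 - 1) := Nat.mul_le_mul_left _ (by omega)
      have e2 : (k * k + 1) * (p - 1) = k * k * (p - 1) + (p - 1) := by ring
      have e5 : k * k * (q0 - 1) + k * k = k * k * q0 := by
        calc k * k * (q0 - 1) + k * k = k * k * ((q0 - 1) + 1) := by ring
          _ = k * k * q0 := by rw [show (q0 - 1) + 1 = q0 by omega]
      omega
    -- large indices never count
    have hbig : ∀ p r, m < p → 1 ≤ r → r ≤ k → ¬ (A p < (k * m + r) + p) := by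
      intro p r hpm hr1 hrk hcon
      have h1 := hAgap (m + 1) p (by omega) (by omega)
      have h2 := hAlb (m + 1) (by omega)
      simp only [Nat.add_sub_cancel] at h2
      have e : k * k * m = k * (k * m) := by ring
      have h4 : 3 * (k * m) ≤ k * (k * m) := Nat.mul_le_mul_right (k * m) (by omega)
      have h5 : m ≤ k * m := Nat.le_mul_of_pos_left m (by omega)
      have h6 : k * 1 ≤ k * m := Nat.mul_le_mul_left k (by omega)
      omega
    -- middle indices (q0+2 ≤ p ≤ m) never count
    have hmid : ∀ p r, q0 + 2 ≤ p → p ≤ m → 1 ≤ r → r ≤ k → ¬ (A p < (k * m + r) + p) := by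
      intro p r hp2 hpm hr1 hrk hcon
      have hIHp := IH (p - 1) (by omega)
      rw [show p - 1 + 1 = p by omega] at hIHp
      have h1 : k * k * (q0 + 1) ≤ k * k * (p - 1) := Nat.mul_le_mul_left _ (by omega)
      have e2 : (k * k + 1) * (p - 1) = k * k * (p - 1) + (p - 1) := by ring
      have e8 : k * k * (q0 + 1) = k * k * q0 + k * k := by ring
      omega
    -- boundary index q0+1
    have hq1 : ∀ r, 1 ≤ r → r ≤ k →
        (A (q0 + 1) < (k * m + r) + (q0 + 1) ↔
          k * (k + 1) / 2 + omg k q0 ≤ r + k / 2 + k * j0) := by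
      intro r hr1 hrk
      constructor <;> intro h <;> omega
    -- evaluation of the counting function on the m-th block
    have cntEval : ∀ r, 1 ≤ r → r ≤ k →
        ((Finset.Icc 1 (k * m + r)).filter (fun p => A p < (k * m + r) + p)).card
          = q0 + (if k * (k + 1) / 2 + omg k q0 ≤ r + k / 2 + k * j0 then 1 else 0) := by
      intro r hr1 hrk
      have h5 : m ≤ k * m := Nat.le_mul_of_pos_left m (by omega)
      by_cases hcond : k * (k + 1) / 2 + omg k q0 ≤ r + k / 2 + k * j0
      · rw [if_pos hcond]
        have hset : (Finset.Icc 1 (k * m + r)).filter (fun p => A p < (k * m + r) + p)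
            = Finset.Icc 1 (q0 + 1) := by
          ext p
          simp only [Finset.mem_filter, Finset.mem_Icc]
          constructor
          · rintro ⟨⟨hp1, hp2⟩, hplt⟩
            refine ⟨hp1, ?_⟩
            by_contra hcon2
            push_neg at hcon2
            rcases le_or_gt p m with hpm | hpm
            · exact hmid p r (by omega) hpm hr1 hrk hplt
            · exact hbig p r hpm hr1 hrk hplt
          · rintro ⟨hp1, hp2⟩
            refine ⟨⟨hp1, by omega⟩, ?_⟩
            rcases eq_or_lt_of_le hp2 with he | hlt
            · rw [he]
              exact (hq1 r hr1 hrk).2 hcond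
            · exact hsmall p r hp1 (by omega) hr1 hrk
        rw [hset, Nat.card_Icc]
        omega
      · rw [if_neg hcond]
        have hset : (Finset.Icc 1 (k * m + r)).filter (fun p => A p < (k * m + r) + p)
            = Finset.Icc 1 q0 := by
          ext p
          simp only [Finset.mem_filter, Finset.mem_Icc]
          constructor
          · rintro ⟨⟨hp1, hp2⟩, hplt⟩
            refine ⟨hp1, ?_⟩
            by_contra hcon2
            push_neg at hcon2
            rcases le_or_gt p m with hpm | hpm
            · rcases eq_or_lt_of_le (show q0 + 1 ≤ p by omega) with he | hlt
              · rw [← he] at hplt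
                exact hcond ((hq1 r hr1 hrk).1 hplt)
              · exact hmid p r (by omega) hpm hr1 hrk hplt
            · exact hbig p r hpm hr1 hrk hplt
          · rintro ⟨hp1, hp2⟩
            exact ⟨⟨hp1, by omega⟩, hsmall p r hp1 hp2 hr1 hrk⟩
        rw [hset, Nat.card_Icc]
        omega
    -- summing over the block
    have hsum : ∑ j : Fin k,
        ((Finset.Icc 1 (k * m + ((j : ℕ) + 1))).filter
          (fun p => A p < (k * m + ((j : ℕ) + 1)) + p)).card
        = k * q0 + ((Finset.range k).filter
          (fun x => k * (k + 1) / 2 + omg k q0 ≤ (x + 1) + k / 2 + k * j0)).card := by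
      have h1 : ∀ j : Fin k,
          ((Finset.Icc 1 (k * m + ((j : ℕ) + 1))).filter
            (fun p => A p < (k * m + ((j : ℕ) + 1)) + p)).card
          = q0 + (if k * (k + 1) / 2 + omg k q0 ≤ ((j : ℕ) + 1) + k / 2 + k * j0
              then 1 else 0) :=
        fun j => cntEval ((j : ℕ) + 1) (by omega) (by omega)
      rw [Finset.sum_congr rfl (fun j _ => h1 j), Finset.sum_add_distrib,
        Finset.sum_const, Finset.card_univ, Fintype.card_fin, smul_eq_mul]
      congr 1
      rw [Finset.card_filter]
      exact Fin.sum_univ_eq_sum_range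
        (fun x => if k * (k + 1) / 2 + omg k q0 ≤ (x + 1) + k / 2 + k * j0 then 1 else 0) k
    have hAm := hAsum m
    rw [hsum] at hAm
    have homg : omg k m = sigN k (omg k q0) j0 := by
      have h := omg_fix k hk q0 j0 hj0k
      rw [hmq] at h
      exact h
    have hsig := sig_add k hk (omg k q0) j0 hj0k hrange.1 hrange.2
    rw [← homg] at hsig
    have e9 : (k * k + 1) * m = k * k * m + m := by ring
    omega

end AB


/-- There is a k-uniform substitution σ on {1,…,k} (k even) or {0,…,k-1} (k odd),
with unique fixed point ω starting from the letter i = ⌊k/2⌋ (all substituted words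
have initial digit i), such that A n = κ(n-1) + t_k - i + ω(n-1). -/
theorem stmt11 (k : ℕ) (hk : 2 < k) (A B : ℕ → ℕ)
    (h : AntiRec k (fun _ => 1) A B) :
    ∃ (σ : ℕ → Fin k → ℕ) (ω : ℕ → ℕ),
      (∀ c ∈ (if k % 2 = 0 then Finset.Icc 1 k else Finset.Icc 0 (k - 1)),
        ∀ j : Fin k, σ c j ∈ (if k % 2 = 0 then Finset.Icc 1 k else Finset.Icc 0 (k - 1))) ∧
      -- every substituted word has initial digit i = ⌊k/2⌋
      (∀ c ∈ (if k % 2 = 0 then Finset.Icc 1 k else Finset.Icc 0 (k - 1)),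
        σ c ⟨0, by omega⟩ = k / 2) ∧
      -- ω is the fixed point of σ starting from the letter i = ⌊k/2⌋
      ω 0 = k / 2 ∧
      (∀ n : ℕ, ∀ j : Fin k, ω (k * n + (j : ℕ)) = σ (ω n) j) ∧
      -- the fixed point is unique
      (∀ ω' : ℕ → ℕ, ω' 0 = k / 2 →
        (∀ n : ℕ, ∀ j : Fin k, ω' (k * n + (j : ℕ)) = σ (ω' n) j) → ω' = ω) ∧
      -- the formula for the anti-k-bonacci numbers
      (∀ n, 1 ≤ n →
        (A n : ℤ) = (k ^ 2 + 1) * ((n : ℤ) - 1) + (k * (k + 1) / 2 : ℕ) - (k / 2 : ℕ)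
          + ω (n - 1)) := by
  obtain ⟨⟨hAmono, hBmono, hApos, hBpos, hcomp⟩, hrec0⟩ := h
  have hrec : ∀ n, 1 ≤ n → A n = ∑ j : Fin k, B ((n - 1) * k + ((j : ℕ) + 1)) := by
    intro n hn
    have h1 := hrec0 n hn
    simp only [one_mul] at h1
    rw [h1]
    exact Finset.sum_congr rfl (fun j _ => by rw [Nat.add_assoc])
  have hAge := A_ge_id hk hBmono hBpos hrec
  have hBge := B_ge hBmono hBpos
  have hAlb := A_lb hBmono hBpos hrec
  have hpart := partition_count hAmono hApos hAge hBmono hBpos hBge hcomp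
  have hpos := pos_iff hAmono hApos hAge hBmono hBpos hBge hcomp
  have hBcnt := B_cnt hk hAmono hApos hAge hAlb hBmono hBpos hBge hcomp hpart hpos
  have hAsum := A_sum hk hrec hBcnt
  have hAgap := mono_gap A hAmono
  have hmain := main_eq hk hAgap hAlb hAsum
  refine ⟨fun c j => sigN k c (j : ℕ), omg k, ?_, ?_, omg_zero k, ?_, ?_, ?_⟩
  · -- alphabet closure
    intro c hc j
    by_cases hk2 : k % 2 = 0
    · simp only [if_pos hk2, Finset.mem_Icc] at hc ⊢
      have := sig_mem k hk c (j : ℕ) j.isLt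
        (by rw [if_pos hk2]; exact hc.1) (by rw [if_pos hk2]; exact hc.2)
      rw [if_pos hk2, if_pos hk2] at this
      exact this
    · simp only [if_neg hk2, Finset.mem_Icc] at hc ⊢
      have := sig_mem k hk c (j : ℕ) j.isLt
        (by rw [if_neg hk2]; omega) (by rw [if_neg hk2]; exact hc.2)
      rw [if_neg hk2, if_neg hk2] at this
      omega
  · -- initial digit
    intro c _
    exact sig_zero k hk c
  · -- fixed point
    intro n j
    exact omg_fix k hk n (j : ℕ) j.isLt
  · -- uniqueness
    intro ω' h0 hfix
    funext m
    induction m using Nat.strong_induction_on with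
    | _ m IH =>
    rcases Nat.eq_zero_or_pos m with rfl | hm
    · rw [h0, omg_zero]
    · have hdm : m / k < m := Nat.div_lt_self hm (by omega)
      have hmk : m % k < k := Nat.mod_lt _ (by omega)
      have h1 := hfix (m / k) ⟨m % k, hmk⟩
      rw [Nat.div_add_mod m k] at h1
      have h2 := omg_fix k hk (m / k) (m % k) hmk
      rw [Nat.div_add_mod m k] at h2
      rw [h1, h2, IH (m / k) hdm]
  · -- the formula
    intro n hn
    obtain ⟨m, rfl⟩ : ∃ m, n = m + 1 := ⟨n - 1, by omega⟩
    have hm := hmain m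
    have hz : ((A (m + 1) : ℤ)) + ((k / 2 : ℕ) : ℤ)
        = ((k * k + 1 : ℕ) : ℤ) * (m : ℤ) + ((k * (k + 1) / 2 : ℕ) : ℤ)
          + ((omg k m : ℕ) : ℤ) := by
      exact_mod_cast congrArg (fun x : ℕ => (x : ℤ)) hm
    simp only [Nat.add_sub_cancel]
    push_cast at hz ⊢
    linear_combination hz
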